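/- Let A be a unital Banach algebra, X a Banach space that is a unital A-bimodule with bounded module action, and L a closed linear subspace of X such that ax - xa ∈ L for all x ∈ L and a ∈ A. Then for every a ∈ A and x ∈ L, exp(-a)·x·exp(a) ∈ L. -/

import Mathlib

open NormedSpace

/-- Let `A` be a unital Banach algebra and `X` a Banach space which is a
unital `A`-bimodule with bounded module action (encoded via the bilinear left action
`ml` and right action `mr`).  If `L` is a closed linear subspace of `X` such that
`a·x - x·a ∈ L` for all `x ∈ L`, `a ∈ A`, then `exp(-a)·x·exp(a) ∈ L` for all
`a ∈ A`, `x ∈ L`. -/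
theorem lie_subspace_exp_invariant
    {A X : Type*} [NormedRing A] [NormedAlgebra ℂ A] [CompleteSpace A]
    [NormOneClass A]
    [NormedAddCommGroup X] [NormedSpace ℂ X] [CompleteSpace X]
    (ml : A →ₗ[ℂ] X →ₗ[ℂ] X) (mr : A →ₗ[ℂ] X →ₗ[ℂ] X)
    (hml : ∀ a b : A, ∀ x : X, ml a (ml b x) = ml (a * b) x)
    (hmr : ∀ a b : A, ∀ x : X, mr b (mr a x) = mr (a * b) x)
    (hmlr : ∀ a b : A, ∀ x : X, ml a (mr b x) = mr b (ml a x))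
    (hone : ∀ x : X, ml 1 x = x ∧ mr 1 x = x)
    (K : ℝ)
    (hbound : ∀ a b : A, ∀ x : X, ‖ml a (mr b x)‖ ≤ K * ‖a‖ * ‖x‖ * ‖b‖)
    (L : Submodule ℂ X) (hclosed : IsClosed (L : Set X))
    (hLie : ∀ x ∈ L, ∀ a : A, ml a x - mr a x ∈ L) :
    ∀ a : A, ∀ x ∈ L, ml (NormedSpace.exp (-a)) (mr (NormedSpace.exp a) x) ∈ L := by
  -- boundedness of the left and right actions
  have hbl : ∀ (b : A) (y : X), ‖ml b y‖ ≤ K * ‖b‖ * ‖y‖ := by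
    intro b y
    have h := hbound b 1 y
    rw [(hone y).2] at h
    simpa [norm_one] using h
  have hbr : ∀ (b : A) (y : X), ‖mr b y‖ ≤ K * ‖b‖ * ‖y‖ := by
    intro b y
    have h := hbound 1 b y
    rw [hmlr 1 b y, (hone y).1] at h
    calc ‖mr b y‖ ≤ K * ‖(1 : A)‖ * ‖y‖ * ‖b‖ := h
      _ = K * ‖b‖ * ‖y‖ := by rw [norm_one]; ring
  -- the actions as continuous linear maps
  let Lop : A →L[ℂ] X →L[ℂ] X := LinearMap.mkContinuous₂ ml K hbl
  let Rop : A →L[ℂ] X →L[ℂ] X := LinearMap.mkContinuous₂ mr K hbr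
  have hLop : ∀ (b : A) (y : X), Lop b y = ml b y := fun _ _ => rfl
  have hRop : ∀ (b : A) (y : X), Rop b y = mr b y := fun _ _ => rfl
  -- the left action as an algebra homomorphism
  let φ : A →ₐ[ℂ] (X →L[ℂ] X) :=
    { toFun := fun b => Lop b
      map_one' := by ext y; exact (hone y).1
      map_mul' := fun b c => by ext y; exact (hml b c y).symm
      map_zero' := by simp
      map_add' := fun b c => by simp
      commutes' := fun c => by
        ext y
        simp only [Algebra.algebraMap_eq_smul_one, map_smul,
          ContinuousLinearMap.smul_apply, ContinuousLinearMap.one_apply]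
        rw [hLop, (hone y).1] }
  have hφcont : Continuous φ := Lop.continuous
  -- the right action as an algebra homomorphism from the opposite algebra
  let ψ : Aᵐᵒᵖ →ₐ[ℂ] (X →L[ℂ] X) :=
    { toFun := fun b => Rop b.unop
      map_one' := by ext y; exact (hone y).2
      map_mul' := fun b c => by ext y; exact (hmr c.unop b.unop y).symm
      map_zero' := by simp
      map_add' := fun b c => by simp
      commutes' := fun c => by
        ext y
        simp only [Algebra.algebraMap_eq_smul_one, MulOpposite.unop_smul,
          MulOpposite.unop_one, map_smul,
          ContinuousLinearMap.smul_apply, ContinuousLinearMap.one_apply]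
        rw [hRop, (hone y).2] }
  have hψcont : Continuous ψ :=
    Rop.continuous.comp MulOpposite.continuous_unop
  intro a x hx
  -- the operator `T = Rop a - Lop a` preserves `L`
  set T : X →L[ℂ] X := Rop a - Lop a with hT
  have hTmem : ∀ y ∈ L, T y ∈ L := by
    intro y hy
    have := L.neg_mem (hLie y hy a)
    have heq : T y = -(ml a y - mr a y) := by
      simp [hT, hLop, hRop]
    rwa [heq]
  have hTn : ∀ n : ℕ, ∀ y ∈ L, (T ^ n) y ∈ L := by
    intro n
    induction n with
    | zero => intro y hy; simpa using hy
    | succ n ih =>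
      intro y hy
      rw [pow_succ, ContinuousLinearMap.mul_apply]
      exact ih _ (hTmem y hy)
  -- the key identity: `exp(-a)·x·exp(a) = exp(T) x`
  have hcomm : Commute (Lop (-a)) (Rop a) := by
    ext y
    simp only [ContinuousLinearMap.mul_apply, hLop, hRop]
    exact hmlr (-a) a y
  have key : ml (exp (-a)) (mr (exp a) x) = exp T x := by
    let +nondep : NormedAlgebra ℚ A := .restrictScalars ℚ ℂ A
    let +nondep : NormedAlgebra ℚ Aᵐᵒᵖ := .restrictScalars ℚ ℂ Aᵐᵒᵖ
    let +nondep : NormedAlgebra ℚ (X →L[ℂ] X) := .restrictScalars ℚ ℂ (X →L[ℂ] X)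
    have h1 : Lop (exp (-a)) = exp (Lop (-a)) :=
      map_exp φ hφcont (-a)
    have h2 : Rop (exp a) = exp (Rop a) := by
      have := map_exp ψ hψcont (MulOpposite.op a)
      rw [exp_op] at this
      exact this
    have h3 : exp T = exp (Lop (-a)) * exp (Rop a) := by
      rw [← exp_add_of_commute hcomm]
      congr 1
      rw [hT]
      simp [sub_eq_add_neg, add_comm]
    calc ml (exp (-a)) (mr (exp a) x)
        = Lop (exp (-a)) (Rop (exp a) x) := rfl
      _ = (exp (Lop (-a)) * exp (Rop a)) x := by
          rw [h1, h2, ContinuousLinearMap.mul_apply]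
      _ = exp T x := by rw [h3]
  rw [key]
  -- expand the exponential as a series and use closedness of `L`
  have hsumOp : HasSum (fun n : ℕ => ((Nat.factorial n : ℂ))⁻¹ • T ^ n) (exp T) :=
    exp_series_hasSum_exp' T
  have hsum : HasSum (fun n : ℕ => ((Nat.factorial n : ℂ))⁻¹ • (T ^ n) x) (exp T x) := by
    have := hsumOp.mapL (ContinuousLinearMap.apply ℂ X x)
    simpa using this
  refine hclosed.mem_of_tendsto hsum.tendsto_sum_nat
    (Filter.Eventually.of_forall fun n => ?_)
  exact L.sum_mem fun i _ => L.smul_mem _ (hTn i x hx)
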